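/- Let K be a field of characteristic p > 0 and suppose [K : ℘(K)] < ∞, where ℘(x) = x^p − x and the index is as additive groups. Then K has only finitely many Artin-Schreier extensions inside a fixed algebraic closure; conversely, if K has only finitely many Artin-Schreier extensions, then [K : ℘(K)] < ∞. -/

import Mathlib

open Polynomial IntermediateField
set_option synthInstance.maxHeartbeats 1000000
set_option maxHeartbeats 1000000

variable {p : ℕ} [Fact p.Prime]

section AuxPoly
lemma AS.monic' {F : Type*} [Field F] (c : F) : ((X:F[X])^p - X - C c).Monic := by
  have hp := (Fact.out : p.Prime).two_le
  have : (X:F[X])^p - X - C c = X^p - (X + C c) := by ring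
  rw [this]
  apply Polynomial.monic_X_pow_sub
  apply lt_of_le_of_lt (Polynomial.degree_add_le _ _)
  have h1 : (X : F[X]).degree = 1 := Polynomial.degree_X
  have h2 : (C c).degree ≤ 0 := Polynomial.degree_C_le
  have hlt : (1 : WithBot ℕ) < (p : WithBot ℕ) := by
    exact_mod_cast Nat.lt_of_lt_of_le one_lt_two hp
  rw [h1]
  exact lt_of_le_of_lt (max_le le_rfl (h2.trans zero_le_one)) hlt

lemma AS.natDeg {F : Type*} [Field F] (c : F) : ((X:F[X])^p - X - C c).natDegree = p := by
  have hp := (Fact.out : p.Prime).two_le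
  have : (X:F[X])^p - X - C c = X^p - (X + C c) := by ring
  rw [this, Polynomial.natDegree_sub_eq_left_of_natDegree_lt, Polynomial.natDegree_X_pow]
  rw [Polynomial.natDegree_X_pow]
  apply Nat.lt_of_le_of_lt (Polynomial.natDegree_add_le _ _)
  simp [Polynomial.natDegree_C, Polynomial.natDegree_X]
  omega

/-- roots of X^p - X are the naturals < p -/
lemma AS.rootsFp {F : Type*} [Field F] [CharP F p] {x : F} (hx : x ^ p = x) :
    ∃ n : ℕ, n < p ∧ x = (n : F) := by
  classical
  set g : F[X] := X^p - X - C 0 with hg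
  have hg0 : g ≠ 0 := (AS.monic' 0).ne_zero
  have hgroot : ∀ y : F, y ^ p = y → y ∈ g.roots := by
    intro y hy
    rw [Polynomial.mem_roots hg0]
    simp [hg, Polynomial.IsRoot, hy]
  have hcast : ∀ n : ℕ, ((n : F)) ^ p = (n : F) := by
    intro n
    have := map_natCast (frobenius F p) n
    rwa [frobenius_def] at this
  set S : Finset F := (Finset.range p).image (fun n : ℕ => (n : F)) with hS
  have hcard : S.card = p := by
    rw [hS, Finset.card_image_of_injOn, Finset.card_range]
    intro a ha b hb hab
    exact CharP.natCast_injOn_Iio F p (by simpa using ha) (by simpa using hb) hab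
  by_contra hcon
  push_neg at hcon
  have hxS : x ∉ S := by
    intro hxS
    rw [hS] at hxS
    obtain ⟨n, hn, rfl⟩ := Finset.mem_image.mp hxS
    exact absurd rfl (hcon n (Finset.mem_range.mp hn))
  have hsub : insert x S ⊆ g.roots.toFinset := by
    intro y hy
    rw [Multiset.mem_toFinset]
    rcases Finset.mem_insert.mp hy with rfl | hyS
    · exact hgroot y hx
    · obtain ⟨n, _, rfl⟩ := Finset.mem_image.mp hyS
      exact hgroot _ (hcast n)
  have h1 : (insert x S).card = p + 1 := by rw [Finset.card_insert_of_notMem hxS, hcard]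
  have h2 : g.roots.toFinset.card ≤ p := by
    calc g.roots.toFinset.card ≤ Multiset.card g.roots := g.roots.toFinset_card_le
      _ ≤ g.natDegree := Polynomial.card_roots' g
      _ = p := AS.natDeg 0
  have := Finset.card_le_card hsub
  omega

end AuxPoly

section
variable {K : Type*} [Field K] [CharP K p]

/-- The range of the Artin-Schreier map. -/
abbrev ASr (K : Type*) [Field K] (p : ℕ) [Fact p.Prime] [CharP K p] : AddSubgroup K :=
  ((frobenius K p).toAddMonoidHom - AddMonoidHom.id K).range

local notation "Ω" => AlgebraicClosure K

lemma AS.memR_iff (x : K) : x ∈ ASr K p ↔ ∃ k : K, k ^ p - k = x := by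
  constructor
  · rintro ⟨k, rfl⟩
    exact ⟨k, by simp [frobenius_def]⟩
  · rintro ⟨k, rfl⟩
    exact ⟨k, by simp [frobenius_def]⟩

lemma AS.exists_root (a : K) : ∃ α : Ω, α ^ p - α = algebraMap K Ω a := by
  obtain ⟨α, hα⟩ := IsAlgClosed.exists_root
    ((X : Polynomial Ω)^p - X - C (algebraMap K Ω a)) (by
      rw [Polynomial.degree_eq_natDegree (AS.monic' _).ne_zero, AS.natDeg]
      exact_mod_cast (Fact.out : p.Prime).ne_zero)
  refine ⟨α, ?_⟩
  have := hα
  simp only [Polynomial.IsRoot, Polynomial.eval_sub, Polynomial.eval_pow,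
    Polynomial.eval_X, Polynomial.eval_C] at this
  linear_combination this

lemma AS.sub_mem_bot {α β : Ω} (h : α ^ p - α = β ^ p - β) :
    α - β ∈ (⊥ : IntermediateField K Ω) := by
  haveI : CharP Ω p := charP_of_injective_algebraMap (algebraMap K Ω).injective p
  have hx : (α - β) ^ p = α - β := by
    rw [sub_pow_char]
    linear_combination h
  obtain ⟨n, -, hn⟩ := AS.rootsFp hx
  rw [hn]
  exact IntermediateField.natCast_mem _ n

lemma AS.adjoin_eq_of_sub_mem_bot {α β : Ω} (h : α - β ∈ (⊥ : IntermediateField K Ω)) :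
    IntermediateField.adjoin K {α} = IntermediateField.adjoin K {β} := by
  have key : ∀ γ δ : Ω, γ - δ ∈ (⊥ : IntermediateField K Ω) →
      IntermediateField.adjoin K {γ} ≤ IntermediateField.adjoin K {δ} := by
    intro γ δ hγδ
    rw [IntermediateField.adjoin_le_iff, Set.singleton_subset_iff]
    have h1 : δ ∈ IntermediateField.adjoin K {δ} :=
      IntermediateField.mem_adjoin_simple_self K δ
    have h2 : γ - δ ∈ IntermediateField.adjoin K {δ} := SetLike.le_def.mp bot_le hγδ
    have := add_mem h2 h1
    simpa using this
  refine le_antisymm (key _ _ h) (key _ _ ?_)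
  have := neg_mem h
  simpa using this

lemma AS.root_mem_bot_iff {a : K} {α : Ω} (ha : α ^ p - α = algebraMap K Ω a) :
    α ∈ (⊥ : IntermediateField K Ω) ↔ a ∈ ASr K p := by
  constructor
  · intro h
    rw [IntermediateField.mem_bot] at h
    obtain ⟨k, rfl⟩ := h
    rw [AS.memR_iff]
    refine ⟨k, (algebraMap K Ω).injective ?_⟩
    rw [map_sub, map_pow, ha]
  · intro h
    rw [AS.memR_iff] at h
    obtain ⟨k, hk⟩ := h
    have hroot : (algebraMap K Ω k) ^ p - algebraMap K Ω k = algebraMap K Ω a := by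
      rw [← map_pow, ← map_sub, hk]
    have := AS.sub_mem_bot (ha.trans hroot.symm)
    have h2 : algebraMap K Ω k ∈ (⊥ : IntermediateField K Ω) :=
      IntermediateField.algebraMap_mem _ _
    have := add_mem this h2
    simpa using this

lemma AS.minpoly_eq {a : K} {α : Ω} (ha : α ^ p - α = algebraMap K Ω a)
    (hα : α ∉ (⊥ : IntermediateField K Ω)) :
    minpoly K α = (X:Polynomial K)^p - X - C a := by
  haveI : CharP Ω p := charP_of_injective_algebraMap (algebraMap K Ω).injective p
  set f : Polynomial K := (X:Polynomial K)^p - X - C a with hf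
  have hfa : Polynomial.aeval α f = 0 := by
    simp only [hf, map_sub, map_pow, Polynomial.aeval_X, Polynomial.aeval_C]
    rw [ha]; ring
  have hint : IsIntegral K α := ⟨f, AS.monic' a, by rwa [← Polynomial.aeval_def]⟩
  set g := minpoly K α with hg
  have hgm : g.Monic := minpoly.monic hint
  have hdvd : g ∣ f := minpoly.dvd K α hfa
  have hmle : g.natDegree ≤ p := by
    have := Polynomial.natDegree_le_of_dvd hdvd (AS.monic' a).ne_zero
    rwa [AS.natDeg] at this
  have hmne : g.natDegree = p := by
    by_contra hne
    have hmlt : g.natDegree < p := lt_of_le_of_ne hmle hne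
    have hm1 : 1 ≤ g.natDegree := minpoly.natDegree_pos hint
    -- work in Ω
    set gΩ := g.map (algebraMap K Ω) with hgΩ
    have hgΩm : gΩ.Monic := hgm.map _
    have hsplits : gΩ.Splits :=
      IsAlgClosed.splits gΩ
    have hcard : Multiset.card gΩ.roots = g.natDegree := by
      rw [(Polynomial.splits_iff_card_roots).mp hsplits, Polynomial.natDegree_map]
    have hsum : gΩ.roots.sum = -gΩ.nextCoeff := by
      have := hsplits.nextCoeff_eq_neg_sum_roots_of_monic hgΩm
      rw [this]; ring
    have hroots : ∀ γ ∈ gΩ.roots, γ - α ∈ (⊥ : IntermediateField K Ω) := by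
      intro γ hγ
      have hγ0 : Polynomial.aeval γ g = 0 := by
        have := (Polynomial.mem_roots hgΩm.ne_zero).mp hγ
        rwa [Polynomial.IsRoot, Polynomial.eval_map, ← Polynomial.aeval_def] at this
      have hγf : Polynomial.aeval γ f = 0 := by
        obtain ⟨q, hq⟩ := hdvd
        rw [hq, map_mul, hγ0, zero_mul]
      have hγp : γ ^ p - γ = algebraMap K Ω a := by
        simp only [hf, map_sub, map_pow, Polynomial.aeval_X, Polynomial.aeval_C] at hγf
        linear_combination hγf
      exact AS.sub_mem_bot (hγp.trans ha.symm)
    -- sum of roots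
    have hsum2 : gΩ.roots.sum =
        (gΩ.roots.map (fun γ => γ - α)).sum + (g.natDegree : Ω) * α := by
      conv_lhs => rw [show gΩ.roots = gΩ.roots.map (fun γ => (γ - α) + α) by
        rw [Multiset.map_congr rfl (fun γ _ => by ring), Multiset.map_id']]
      rw [Multiset.sum_map_add, Multiset.map_const', Multiset.sum_replicate, hcard,
        nsmul_eq_mul]
    have hmem1 : (gΩ.roots.map (fun γ => γ - α)).sum ∈ (⊥ : IntermediateField K Ω) := by
      apply multiset_sum_mem
      intro x hx
      obtain ⟨γ, hγ, rfl⟩ := Multiset.mem_map.mp hx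
      exact hroots γ hγ
    have hmem2 : gΩ.roots.sum ∈ (⊥ : IntermediateField K Ω) := by
      rw [hsum]
      rw [hgΩ, Polynomial.nextCoeff_map (algebraMap K Ω).injective]
      exact neg_mem (IntermediateField.algebraMap_mem _ _)
    have hmul : (g.natDegree : Ω) * α ∈ (⊥ : IntermediateField K Ω) := by
      have := sub_mem hmem2 hmem1
      rw [hsum2] at this
      simpa using this
    have hne0 : ((g.natDegree : K)) ≠ 0 := by
      rw [Ne, CharP.cast_eq_zero_iff K p]
      intro hdvd'
      exact absurd (Nat.le_of_dvd (by omega) hdvd') (by omega)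
    have hne0' : ((g.natDegree : Ω)) ≠ 0 := by
      rw [show ((g.natDegree : Ω)) = algebraMap K Ω (g.natDegree : K) by push_cast; rfl]
      have : algebraMap K Ω (g.natDegree : K) ≠ algebraMap K Ω 0 :=
        fun h => hne0 ((algebraMap K Ω).injective h)
      simpa using this
    apply hα
    have : α = ((g.natDegree : Ω))⁻¹ * ((g.natDegree : Ω) * α) := by
      field_simp
    rw [this]
    exact mul_mem (inv_mem (IntermediateField.natCast_mem _ _)) hmul
  exact (Polynomial.eq_of_monic_of_dvd_of_natDegree_le hgm (AS.monic' a) hdvd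
    (by rw [AS.natDeg, hmne])).symm

lemma AS.key {a b : K} {α β : Ω} (ha : α ^ p - α = algebraMap K Ω a)
    (hb : β ^ p - β = algebraMap K Ω b)
    (hα : α ∉ (⊥ : IntermediateField K Ω))
    (hβL : β ∈ IntermediateField.adjoin K {α}) :
    ∃ n : ℕ, n < p ∧ b - n • a ∈ ASr K p := by
  haveI : CharP Ω p := charP_of_injective_algebraMap (algebraMap K Ω).injective p
  set f : Polynomial K := (X:Polynomial K)^p - X - C a with hf
  have hfa : Polynomial.aeval α f = 0 := by
    simp only [hf, map_sub, map_pow, Polynomial.aeval_X, Polynomial.aeval_C]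
    rw [ha]; ring
  have hint : IsIntegral K α := ⟨f, AS.monic' a, by rwa [← Polynomial.aeval_def]⟩
  have hmin : minpoly K α = f := AS.minpoly_eq ha hα
  set L : IntermediateField K Ω := IntermediateField.adjoin K {α} with hL
  haveI : FiniteDimensional K L := IntermediateField.adjoin.finiteDimensional hint
  haveI : CharP L p := charP_of_injective_algebraMap (algebraMap K L).injective p
  set gen : L := IntermediateField.AdjoinSimple.gen K α with hgen
  -- gen ^ p - gen = a
  have hgeneq : gen ^ p - gen = algebraMap K L a := by
    have h0 := IntermediateField.aeval_gen_minpoly K α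
    rw [hmin] at h0
    simp only [hf, map_sub, map_pow, Polynomial.aeval_X, Polynomial.aeval_C] at h0
    linear_combination h0
  -- power basis and the automorphism
  set pb := IntermediateField.adjoin.powerBasis hint with hpb
  have hpbgen : pb.gen = gen := IntermediateField.adjoin.powerBasis_gen hint
  have hroot : Polynomial.aeval (gen + 1) (minpoly K pb.gen) = 0 := by
    rw [hpbgen, hgen, IntermediateField.minpoly_gen, hmin]
    simp only [hf, map_sub, map_pow, Polynomial.aeval_X, Polynomial.aeval_C]
    rw [add_pow_char, one_pow]
    rw [← hgen]
    linear_combination hgeneq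
  set σ : L →ₐ[K] L := pb.lift (gen + 1) hroot with hσ
  have hσgen : σ gen = gen + 1 := by
    have h0 := pb.lift_gen (gen + 1) hroot
    rwa [hpbgen] at h0
  -- β as an element of L
  set βL : L := ⟨β, hβL⟩ with hβLdef
  have hβeq : βL ^ p - βL = algebraMap K L b := by
    apply (algebraMap L Ω).injective
    rw [RingHom.map_sub, RingHom.map_pow, ← IsScalarTower.algebraMap_apply K L Ω]
    have hcoe : algebraMap L Ω βL = β := rfl
    rw [hcoe]; exact hb
  -- σ βL - βL is in the prime field
  have hd : (σ βL - βL) ^ p = σ βL - βL := by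
    have h1 : (σ βL) ^ p - σ βL = algebraMap K L b := by
      rw [← map_pow, ← map_sub, hβeq, AlgHom.commutes]
    rw [sub_pow_char]
    linear_combination h1 - hβeq
  obtain ⟨n, hnp, hn⟩ := AS.rootsFp hd
  refine ⟨n, hnp, ?_⟩
  have hσβ : σ βL = βL + (n : L) := by linear_combination hn
  -- the fixed element
  set δ : L := βL - n • gen with hδ
  have hσδ : σ δ = δ := by
    rw [hδ, map_sub, hσβ, map_nsmul, hσgen]
    have : n • (gen + 1) = n • gen + (n : L) := by
      rw [smul_add]; congr 1; rw [nsmul_eq_mul, mul_one]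
    rw [this]; ring
  -- fixed field
  set M : IntermediateField K L :=
    { toSubalgebra := AlgHom.equalizer σ (AlgHom.id K L)
      inv_mem' := by
        intro x hx
        have hx' : σ x = x := hx
        show σ x⁻¹ = x⁻¹
        rw [map_inv₀, hx'] } with hM
  have hmemM : ∀ x : L, x ∈ M ↔ σ x = x := fun x => Iff.rfl
  have hfr : Module.finrank K L = p := by
    rw [hL, IntermediateField.adjoin.finrank hint, hmin, AS.natDeg]
  have hfrM := Module.finrank_mul_finrank (F := K) (K := ↥M) (A := ↥L)
  rw [hfr] at hfrM
  have hMdvd : Module.finrank K ↥M ∣ p := Dvd.intro _ hfrM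
  rcases (Fact.out : p.Prime).eq_one_or_self_of_dvd _ hMdvd with hM1 | hMp
  · -- M = ⊥, so δ comes from K
    have hMbot : M = ⊥ := IntermediateField.finrank_eq_one_iff.mp hM1
    have hδM : δ ∈ M := (hmemM δ).mpr hσδ
    rw [hMbot, IntermediateField.mem_bot] at hδM
    obtain ⟨c, hc⟩ := hδM
    -- b - n•a = c^p - c
    rw [AS.memR_iff]
    refine ⟨c, ?_⟩
    have hc' : algebraMap K ↥L c = βL - n • gen := by rw [hc, hδ]
    have hβL3 : βL = algebraMap K ↥L c + (n:↥L) * gen := by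
      rw [← nsmul_eq_mul, hc']; ring
    have hcast : ((n:↥L)) ^ p = (n : ↥L) := by
      have h' := map_natCast (frobenius (↥L) p) n
      rwa [frobenius_def] at h'
    have hgenp : gen ^ p = algebraMap K ↥L a + gen := by linear_combination hgeneq
    have key : algebraMap K ↥L b = algebraMap K ↥L (c ^ p - c + n • a) := by
      have e1 : ((n:↥L) * gen)^p = (n:↥L) * (algebraMap K ↥L a + gen) := by
        rw [mul_pow, hcast, hgenp]
      have e2 : algebraMap K ↥L (c ^ p - c + n • a)
          = algebraMap K ↥L (c^p) - algebraMap K ↥L c + (n:↥L) * algebraMap K ↥L a := by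
        rw [map_add, map_sub, map_nsmul, nsmul_eq_mul, map_pow]
      rw [← hβeq, e2]
      conv_lhs => rw [hβL3]
      rw [add_pow_char, map_pow]
      linear_combination e1
    have hbinj : b = c ^ p - c + n • a := (algebraMap K ↥L).injective key
    rw [hbinj]; abel
  · -- M = ⊤, contradiction
    exfalso
    have hMtop : M = ⊤ := by
      apply IntermediateField.eq_of_le_of_finrank_le le_top
      rw [IntermediateField.finrank_top']
      omega
    have hgenM : gen ∈ M := hMtop ▸ IntermediateField.mem_top
    have := (hmemM gen).mp hgenM
    rw [hσgen] at this
    have : (1 : L) = 0 := by linear_combination this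
    exact one_ne_zero this

end

/-- Let `K` be a field of characteristic `p > 0` and `℘(x) = x^p - x`. Then
`[K : ℘(K)] < ∞` (as additive groups) if and only if `K` has only finitely many
Artin-Schreier extensions inside a fixed algebraic closure, i.e. intermediate fields
`L = K(α)` with `α ∉ K` and `α^p - α ∈ K`. -/
theorem stmt_16 (K : Type*) [Field K] (p : ℕ) [Fact p.Prime] [CharP K p] :
    ((frobenius K p).toAddMonoidHom - AddMonoidHom.id K).range.FiniteIndex ↔
    {L : IntermediateField K (AlgebraicClosure K) |
      ∃ α : AlgebraicClosure K,
        α ∉ (⊥ : IntermediateField K (AlgebraicClosure K)) ∧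
        α ^ p - α ∈ (⊥ : IntermediateField K (AlgebraicClosure K)) ∧
        L = IntermediateField.adjoin K {α}}.Finite := by
  classical
  set Ω := AlgebraicClosure K
  set R : AddSubgroup K := ASr K p with hR
  set S := {L : IntermediateField K Ω |
      ∃ α : Ω, α ∉ (⊥ : IntermediateField K Ω) ∧
        α ^ p - α ∈ (⊥ : IntermediateField K Ω) ∧
        L = IntermediateField.adjoin K {α}} with hS
  -- the chosen roots
  let roo : K → Ω := fun a => (AS.exists_root (p := p) a).choose
  have hroo : ∀ a : K, (roo a) ^ p - roo a = algebraMap K Ω a :=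
    fun a => (AS.exists_root a).choose_spec
  let F : K → IntermediateField K Ω := fun a => IntermediateField.adjoin K {roo a}
  have hFconst : ∀ a b : K, a - b ∈ R → F a = F b := by
    intro a b hab
    rw [AS.memR_iff] at hab
    obtain ⟨k, hk⟩ := hab
    have h2 : (roo b + algebraMap K Ω k) ^ p - (roo b + algebraMap K Ω k)
        = algebraMap K Ω a := by
      haveI : CharP Ω p := charP_of_injective_algebraMap (algebraMap K Ω).injective p
      rw [add_pow_char]
      have := hroo b
      rw [show (a : K) = b + (k ^ p - k) by rw [hk]; ring, map_add, ← this,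
        map_sub, map_pow]
      ring
    have hsub := AS.sub_mem_bot ((hroo a).trans h2.symm)
    have hsub2 : roo a - roo b ∈ (⊥ : IntermediateField K Ω) := by
      have := add_mem hsub (IntermediateField.algebraMap_mem (⊥ : IntermediateField K Ω) k)
      convert this using 1
      ring
    exact AS.adjoin_eq_of_sub_mem_bot hsub2
  -- the induced map on the quotient
  let Fq : K ⧸ R → IntermediateField K Ω := fun x =>
    Quotient.liftOn' x F (by
      intro a b hab
      rw [QuotientAddGroup.leftRel_apply] at hab
      exact (hFconst b a (by rwa [← sub_eq_neg_add] at hab)).symm)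
  have hFq : ∀ a : K, Fq (QuotientAddGroup.mk' R a) = F a := fun a => rfl
  constructor
  · -- finite index → finitely many extensions
    intro h
    haveI : R.FiniteIndex := h
    haveI : Finite (K ⧸ R) := AddSubgroup.finite_quotient_of_finiteIndex (H := R)
    apply (Set.finite_range Fq).subset
    rintro L ⟨α, hα, hαp, rfl⟩
    rw [IntermediateField.mem_bot] at hαp
    obtain ⟨a, ha⟩ := hαp
    refine ⟨QuotientAddGroup.mk' R a, ?_⟩
    rw [hFq]
    have hsub : roo a - α ∈ (⊥ : IntermediateField K Ω) :=
      AS.sub_mem_bot ((hroo a).trans ha)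
    exact AS.adjoin_eq_of_sub_mem_bot hsub
  · -- finitely many extensions → finite index
    intro hSfin
    have hfib : ∀ x y : K ⧸ R, Fq x = Fq y → ∃ n : ℕ, n < p ∧ y = n • x := by
      intro x y hxy
      obtain ⟨a, rfl⟩ := QuotientAddGroup.mk'_surjective R x
      obtain ⟨b, rfl⟩ := QuotientAddGroup.mk'_surjective R y
      rw [hFq, hFq] at hxy
      by_cases hbot : roo a ∈ (⊥ : IntermediateField K Ω)
      · have hFa : F a = ⊥ := le_antisymm (by
          rw [IntermediateField.adjoin_le_iff, Set.singleton_subset_iff]; exact hbot) bot_le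
        have hbbot : roo b ∈ (⊥ : IntermediateField K Ω) := by
          have : roo b ∈ F b := IntermediateField.mem_adjoin_simple_self K (roo b)
          rw [← hxy, hFa] at this
          exact this
        have hbR : b ∈ R := (AS.root_mem_bot_iff (hroo b)).mp hbbot
        have haR : a ∈ R := (AS.root_mem_bot_iff (hroo a)).mp hbot
        refine ⟨0, (Fact.out : p.Prime).pos, ?_⟩
        rw [zero_nsmul]
        rw [← map_zero (QuotientAddGroup.mk' R)]
        rw [QuotientAddGroup.mk'_eq_mk']
        exact ⟨-b, by simpa using neg_mem hbR, by ring⟩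
      · have hmem : roo b ∈ IntermediateField.adjoin K {roo a} := by
          have : roo b ∈ F b := IntermediateField.mem_adjoin_simple_self K (roo b)
          rw [← hxy] at this
          exact this
        obtain ⟨n, hnp, hnR⟩ := AS.key (hroo a) (hroo b) hbot hmem
        refine ⟨n, hnp, ?_⟩
        rw [← map_nsmul (QuotientAddGroup.mk' R), QuotientAddGroup.mk'_eq_mk']
        exact ⟨-b + n • a, by rw [neg_add_eq_sub, ← neg_sub]; exact neg_mem hnR, by ring⟩
    have hrange : Set.range Fq ⊆ insert ⊥ S := by
      rintro L ⟨x, rfl⟩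
      obtain ⟨a, rfl⟩ := QuotientAddGroup.mk'_surjective R x
      rw [hFq]
      by_cases hbot : roo a ∈ (⊥ : IntermediateField K Ω)
      · left
        exact le_antisymm (by
          rw [IntermediateField.adjoin_le_iff, Set.singleton_subset_iff]; exact hbot) bot_le
      · right
        exact ⟨roo a, hbot, by rw [hroo a]; exact IntermediateField.algebraMap_mem _ _, rfl⟩
    have hfibfin : ∀ L : IntermediateField K Ω, (Fq ⁻¹' {L}).Finite := by
      intro L
      rcases Set.eq_empty_or_nonempty (Fq ⁻¹' {L}) with he | ⟨x₀, hx₀⟩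
      · rw [he]; exact Set.finite_empty
      · apply Set.Finite.subset (Set.Finite.image (fun n : ℕ => n • x₀) (Set.finite_Iio p))
        intro y hy
        obtain ⟨n, hnp, hn⟩ := hfib x₀ y (by rw [hx₀, hy])
        exact ⟨n, hnp, hn.symm⟩
    have huniv : (Set.univ : Set (K ⧸ R)).Finite := by
      have hcover : (Set.univ : Set (K ⧸ R)) ⊆
          ⋃ L ∈ insert ⊥ S, Fq ⁻¹' {L} := by
        intro x _
        simp only [Set.mem_iUnion]
        exact ⟨Fq x, hrange ⟨x, rfl⟩, rfl⟩
      exact Set.Finite.subset (Set.Finite.biUnion (hSfin.insert ⊥) fun L _ => hfibfin L) hcover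
    haveI : Finite (K ⧸ R) := Set.finite_univ_iff.mp huniv
    exact AddSubgroup.finiteIndex_of_finite_quotient (H := R)
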